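/- Let a₁, a₂ ∈ ℚ^× and let I be a nonzero ideal of ℤ[1/2]. Then there exist: an element t ∈ ℤ[1/2] with t > 0; rationals x₁,y₁,x₂,y₂ with xᵢ² + t·yᵢ² = 1 for i = 1,2; finite sets R₁, R₂ of odd primes; and, for every prime p ∈ P(I) ∪ R₁ ∪ R₂, an element ζ_p ∈ ℤ_p with ζ_p² = −t; such that, with L := ℚ(√−t) and zᵢ := xᵢ + yᵢ√−t ∈ L: (1) for i = 1,2 and every p ∈ P(I), v_p((xᵢ + yᵢ·ζ_p)·aᵢ⁻¹ − 1) ≥ v_p(I); (2) the four sets P(I), R₁, R₂, and P(t) := {odd primes p : v_p(t) > 0} are pairwise disjoint; (3) for i = 1,2, for every odd prime p ∉ P(I) ∪ Rᵢ and every prime ideal 𝔮 of the ring of integers of L lying over p, the 𝔮-adic valuation of zᵢ is 0. Here P(I) := {odd primes p : I ⊆ pℤ[1/2]} and v_p(I) := max{e ∈ ℕ : I ⊆ p^e ℤ[1/2]}. -/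

import Mathlib

/-- The ring `ℤ[1/2]`, realized as the smallest subring of `ℚ` containing `1/2`. -/
def Zhalf : Subring ℚ := Subring.closure {(2 : ℚ)⁻¹}

lemma Zhalf_mem (x : ℚ) (hx : x ∈ Zhalf) : ∃ (n : ℤ) (k : ℕ), x = n / 2 ^ k := by
  refine Subring.closure_induction ?_ ?_ ?_ ?_ ?_ ?_ hx
  · rintro y hy
    rcases hy with rfl
    exact ⟨1, 1, by norm_num⟩
  · exact ⟨0, 0, by norm_num⟩
  · exact ⟨1, 0, by norm_num⟩
  · rintro a b _ _ ⟨n, k, rfl⟩ ⟨n', k', rfl⟩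
    refine ⟨n * 2 ^ k' + n' * 2 ^ k, k + k', ?_⟩
    push_cast
    rw [div_add_div _ _ (by positivity) (by positivity)]
    ring_nf
  · rintro a _ ⟨n, k, rfl⟩
    exact ⟨-n, k, by push_cast; ring⟩
  · rintro a b _ _ ⟨n, k, rfl⟩ ⟨n', k', rfl⟩
    refine ⟨n * n', k + k', ?_⟩
    push_cast
    rw [div_mul_div_comm]
    ring_nf

lemma Zhalf_pow_dvd {p : ℕ} (hp : p.Prime) (hp2 : p ≠ 2) (e : ℕ) {g : ↥Zhalf}
    (h : (p : ↥Zhalf) ^ e ∣ g) (m : ℤ) (k : ℕ) (hg : (g : ℚ) = m / 2 ^ k) :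
    (p : ℤ) ^ e ∣ m := by
  obtain ⟨h', rfl⟩ := h
  obtain ⟨n, j, hn⟩ := Zhalf_mem (h' : ℚ) h'.2
  have hq : (m : ℚ) / 2 ^ k = (p : ℚ) ^ e * (n / 2 ^ j) := by
    rw [← hn, ← hg]; push_cast; ring
  have hint : m * 2 ^ j = (p : ℤ) ^ e * n * 2 ^ k := by
    field_simp at hq
    have h' : ((m * 2 ^ j : ℤ) : ℚ) = (((p : ℤ) ^ e * n * 2 ^ k : ℤ) : ℚ) := by
      push_cast; linear_combination hq
    exact_mod_cast h'
  have hcop : IsCoprime ((p : ℤ) ^ e) ((2 : ℤ) ^ j) := by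
    refine IsCoprime.pow ?_
    rw [Int.isCoprime_iff_gcd_eq_one]
    exact_mod_cast (Nat.coprime_primes hp Nat.prime_two).mpr hp2
  have : (p : ℤ) ^ e ∣ m * 2 ^ j := ⟨n * 2 ^ k, by linarith [hint]⟩
  exact hcop.dvd_of_dvd_mul_right this

lemma exists_int_congr (W : Finset ℕ) (p : ℕ) (hp : p.Prime) (hpW : p ∉ W)
    (hW : ∀ q ∈ W, q.Prime) (M : ℕ → ℕ) :
    ∃ E : ℤ, ((p : ℤ) ^ M p ∣ E - 1) ∧ ∀ q ∈ W, (q : ℤ) ^ M q ∣ E := by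
  have hcop : IsCoprime (∏ q ∈ W, (q : ℤ) ^ M q) ((p : ℤ) ^ M p) := by
    refine IsCoprime.prod_left fun q hq => ?_
    refine IsCoprime.pow ?_
    rw [Int.isCoprime_iff_gcd_eq_one]
    exact_mod_cast (Nat.coprime_primes (hW q hq) hp).mpr (fun h => hpW (h ▸ hq))
  obtain ⟨a, b, hab⟩ := hcop
  refine ⟨a * ∏ q ∈ W, (q : ℤ) ^ M q, ⟨-b, by linarith⟩, fun q hq => ?_⟩
  exact Dvd.dvd.mul_left (Finset.dvd_prod_of_mem _ hq) a

lemma exists_pow_le {q : ℕ} (hq : 1 < q) {C ε : ℝ} (hC : 0 ≤ C) (hε : 0 < ε) :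
    ∃ M : ℕ, C * (q : ℝ) ^ (-(M : ℤ)) ≤ ε := by
  have h1 : ((q : ℝ))⁻¹ < 1 := by
    rw [inv_lt_one_iff₀]; right; exact_mod_cast hq
  obtain ⟨M, hM⟩ := exists_pow_lt_of_lt_one (div_pos hε (by linarith : (0:ℝ) < C + 1)) h1
  refine ⟨M, ?_⟩
  have he : (q : ℝ) ^ (-(M : ℤ)) = ((q:ℝ)⁻¹) ^ M := by
    rw [zpow_neg, zpow_natCast, inv_pow]
  rw [he]
  calc C * ((q:ℝ)⁻¹) ^ M ≤ (C+1) * (ε / (C+1)) := by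
        apply mul_le_mul (by linarith) hM.le (by positivity) (by linarith)
    _ = ε := by field_simp

lemma rat_CRT (W : Finset ℕ) (hW : ∀ p ∈ W, p.Prime) (r' : ℕ → ℚ) (ε : ℕ → ℝ)
    (hε : ∀ p ∈ W, 0 < ε p) :
    ∃ r : ℚ, ∀ (p : ℕ) (hp : p.Prime), p ∈ W →
      letI : Fact p.Prime := ⟨hp⟩
      ‖((r : ℚ_[p]) - (r' p : ℚ_[p]))‖ ≤ ε p := by
  classical
  induction W using Finset.induction_on with
  | empty => exact ⟨0, fun p hp hmem => absurd hmem (Finset.notMem_empty p)⟩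
  | @insert p W' hpW' ih =>
    have hp : p.Prime := hW p (Finset.mem_insert_self p W')
    haveI : Fact p.Prime := ⟨hp⟩
    have hW' : ∀ q ∈ W', q.Prime := fun q hq => hW q (Finset.mem_insert_of_mem hq)
    obtain ⟨s, hs⟩ := ih hW' (fun q hq => hε q (Finset.mem_insert_of_mem hq))
    -- choose exponents
    have hMex : ∀ (q : ℕ) (hq : q ∈ insert p W'), ∃ M : ℕ,
        letI : Fact q.Prime := ⟨hW q hq⟩
        ‖((r' p : ℚ_[q]) - (s : ℚ_[q]))‖ * (q : ℝ) ^ (-(M : ℤ)) ≤ ε q := by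
      intro q hq
      haveI : Fact q.Prime := ⟨hW q hq⟩
      exact exists_pow_le (hW q hq).one_lt (norm_nonneg _) (hε q hq)
    choose M hM using hMex
    set Mf : ℕ → ℕ := fun q => if hq : q ∈ insert p W' then M q hq else 0 with hMf
    obtain ⟨E, hE1, hE2⟩ := exists_int_congr W' p hp hpW' hW' Mf
    refine ⟨s + (r' p - s) * (E : ℚ), fun q hq hmem => ?_⟩
    haveI : Fact q.Prime := ⟨hq⟩
    rcases Finset.mem_insert.mp hmem with rfl | hqW'
    · have key : ((s + (r' q - s) * (E : ℚ) : ℚ) : ℚ_[q]) - (r' q : ℚ_[q])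
          = ((r' q : ℚ_[q]) - s) * ((E : ℚ_[q]) - 1) := by push_cast; ring
      rw [key, norm_mul]
      have hEnorm : ‖(E : ℚ_[q]) - 1‖ ≤ (q : ℝ) ^ (-(Mf q : ℤ)) := by
        have := (Padic.norm_int_le_pow_iff_dvd (E - 1) (Mf q)).mpr hE1
        simpa using this
      calc ‖(r' q : ℚ_[q]) - s‖ * ‖(E : ℚ_[q]) - 1‖
          ≤ ‖(r' q : ℚ_[q]) - s‖ * (q : ℝ) ^ (-(Mf q : ℤ)) :=
            mul_le_mul_of_nonneg_left hEnorm (norm_nonneg _)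
        _ ≤ ε q := by
            have := hM q hmem
            simp only [hMf, dif_pos hmem]
            exact this
    · have key : ((s + (r' p - s) * (E : ℚ) : ℚ) : ℚ_[q]) - (r' q : ℚ_[q])
          = ((s : ℚ_[q]) - (r' q : ℚ_[q])) + ((r' p : ℚ_[q]) - s) * (E : ℚ_[q]) := by
        push_cast; ring
      rw [key]
      refine le_trans (Padic.nonarchimedean _ _) (max_le ?_ ?_)
      · exact hs q hq hqW'
      · rw [norm_mul]
        have hEnorm : ‖(E : ℚ_[q])‖ ≤ (q : ℝ) ^ (-(Mf q : ℤ)) := by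
          have := (Padic.norm_int_le_pow_iff_dvd E (Mf q)).mpr (hE2 q hqW')
          simpa using this
        calc ‖(r' p : ℚ_[q]) - s‖ * ‖(E : ℚ_[q])‖
            ≤ ‖(r' p : ℚ_[q]) - s‖ * (q : ℝ) ^ (-(Mf q : ℤ)) :=
              mul_le_mul_of_nonneg_left hEnorm (norm_nonneg _)
          _ ≤ ε q := by
              have := hM q hmem
              simp only [hMf, dif_pos hmem]
              exact this

lemma simul_approx (W : Finset ℕ) (hW : ∀ p ∈ W, p.Prime)
    (b : ∀ (p : ℕ) (hp : p.Prime), @Padic p ⟨hp⟩) (ε : ℕ → ℝ)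
    (hε : ∀ p ∈ W, 0 < ε p) :
    ∃ r : ℚ, ∀ (p : ℕ) (hp : p.Prime), p ∈ W →
      letI : Fact p.Prime := ⟨hp⟩
      ‖((r : ℚ_[p]) - b p hp)‖ ≤ ε p := by
  classical
  have hrex : ∀ (p : ℕ) (hp : p ∈ W), ∃ r' : ℚ,
      letI : Fact p.Prime := ⟨hW p hp⟩
      ‖(b p (hW p hp) - (r' : ℚ_[p]))‖ ≤ ε p := by
    intro p hp
    haveI : Fact p.Prime := ⟨hW p hp⟩
    obtain ⟨r', hr'⟩ := Padic.rat_dense (p := p) (b p (hW p hp)) (hε p hp)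
    exact ⟨r', hr'.le⟩
  choose r' hr' using hrex
  set rf : ℕ → ℚ := fun p => if hp : p ∈ W then r' p hp else 0 with hrf
  obtain ⟨r, hr⟩ := rat_CRT W hW rf ε hε
  refine ⟨r, fun p hp hmem => ?_⟩
  haveI : Fact p.Prime := ⟨hp⟩
  have key : (r : ℚ_[p]) - b p hp = ((r : ℚ_[p]) - (rf p : ℚ_[p])) + ((rf p : ℚ_[p]) - b p hp) := by
    ring
  rw [key]
  refine le_trans (Padic.nonarchimedean _ _) (max_le (hr p hp hmem) ?_)
  rw [← norm_neg]
  have h2 := hr' p hmem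
  simp only [hrf, dif_pos hmem]
  simpa [neg_sub] using h2
open Polynomial

lemma exists_padic_sqrt {p : ℕ} [hfp : Fact p.Prime] (hp2 : p ≠ 2) (t u : ℤ)
    (h : (p : ℤ) ∣ u ^ 2 + t) (hu : ¬ (p : ℤ) ∣ u) :
    ∃ z : ℤ_[p], (z : ℚ_[p]) ^ 2 = -(t : ℚ_[p]) := by
  set F : Polynomial ℤ_[p] := X ^ 2 + C (t : ℤ_[p]) with hF
  have heval : F.eval (u : ℤ_[p]) = ((u ^ 2 + t : ℤ) : ℤ_[p]) := by
    simp [hF]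
  have hderiv : F.derivative = C 2 * X := by
    simp [hF, derivative_pow]
  have hde : F.derivative.eval (u : ℤ_[p]) = ((2 * u : ℤ) : ℤ_[p]) := by
    rw [hderiv]; simp
  have hnorm1 : ‖F.eval (u : ℤ_[p])‖ < 1 := by
    rw [heval]
    exact (PadicInt.norm_int_lt_one_iff_dvd _).mpr h
  have hnormd : ‖F.derivative.eval (u : ℤ_[p])‖ = 1 := by
    rw [hde]
    by_contra hne
    have hlt : ‖((2 * u : ℤ) : ℤ_[p])‖ < 1 :=
      lt_of_le_of_ne (PadicInt.norm_le_one _) hne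
    have := (PadicInt.norm_int_lt_one_iff_dvd _).mp hlt
    rcases (Int.Prime.dvd_mul' (by exact_mod_cast hfp.out) this) with h2 | h2
    · have hdn : p ∣ 2 := by exact_mod_cast h2
      exact hp2 ((Nat.prime_dvd_prime_iff_eq hfp.out Nat.prime_two).mp hdn)
    · exact hu h2
  obtain ⟨z, hz, -⟩ := hensels_lemma (F := F) (a := (u : ℤ_[p]))
    (by rw [Polynomial.coe_aeval_eq_eval, hnormd]; simpa using hnorm1)
  refine ⟨z, ?_⟩
  have : z ^ 2 + (t : ℤ_[p]) = 0 := by simpa [hF] using hz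
  have hq : ((z ^ 2 + (t : ℤ_[p]) : ℤ_[p]) : ℚ_[p]) = 0 := by rw [this]; simp
  push_cast at hq
  linear_combination hq
open IsDedekindDomain NumberField

section Val
variable (L : Type) [Field L] [NumberField L] [Algebra ℚ L]
  (𝔮 : HeightOneSpectrum (RingOfIntegers L)) (q : ℕ)

lemma val_nat_one (hq : q.Prime) (hq𝔮 : (q : RingOfIntegers L) ∈ 𝔮.asIdeal)
    (d : ℕ) (hd : ¬ q ∣ d) : 𝔮.valuation L ((d : L)) = 1 := by
  have hle : 𝔮.valuation L ((d : L)) ≤ 1 := by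
    have : (d : L) = algebraMap (RingOfIntegers L) L (d : RingOfIntegers L) := by
      simp [map_natCast]
    rw [this]
    exact 𝔮.valuation_le_one (K := L) _
  refine le_antisymm hle ?_
  by_contra hlt
  push_neg at hlt
  have hlt' : 𝔮.valuation L (algebraMap (RingOfIntegers L) L (d : RingOfIntegers L)) < 1 := by
    simpa [map_natCast] using hlt
  have hdvd := (𝔮.valuation_lt_one_iff_dvd (K := L) _).mp hlt'
  have hmem : (d : RingOfIntegers L) ∈ 𝔮.asIdeal := by
    have := Ideal.le_of_dvd hdvd
    exact this (Ideal.mem_span_singleton_self _)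
  -- Bezout
  have hcop : IsCoprime (q : ℤ) (d : ℤ) := by
    rw [Int.isCoprime_iff_gcd_eq_one]
    exact_mod_cast (Nat.Prime.coprime_iff_not_dvd hq).mpr hd
  obtain ⟨a, b, hab⟩ := hcop
  have h1 : (1 : RingOfIntegers L) ∈ 𝔮.asIdeal := by
    have : ((a * q + b * d : ℤ) : RingOfIntegers L) ∈ 𝔮.asIdeal := by
      push_cast
      exact Ideal.add_mem _ (Ideal.mul_mem_left _ _ hq𝔮) (Ideal.mul_mem_left _ _ hmem)
    rw [hab] at this
    exact_mod_cast this
  exact 𝔮.isPrime.ne_top (Ideal.eq_top_of_isUnit_mem _ h1 isUnit_one)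

lemma val_rat_le_one (hq : q.Prime) (hq𝔮 : (q : RingOfIntegers L) ∈ 𝔮.asIdeal)
    (x : ℚ) (hx : ¬ q ∣ x.den) : 𝔮.valuation L (algebraMap ℚ L x) ≤ 1 := by
  have hxL : algebraMap ℚ L x = ((x.num : L)) / ((x.den : L)) := by
    rw [eq_ratCast (algebraMap ℚ L) x, Rat.cast_def]
  rw [hxL, map_div₀]
  have hnum : 𝔮.valuation L ((x.num : L)) ≤ 1 := by
    have : (x.num : L) = algebraMap (RingOfIntegers L) L (x.num : RingOfIntegers L) := by
      simp [map_intCast]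
    rw [this]; exact 𝔮.valuation_le_one (K := L) _
  rw [val_nat_one L 𝔮 q hq hq𝔮 x.den hx, div_one]
  exact hnum
end Val

lemma val_z_one (L : Type) [Field L] [NumberField L] [Algebra ℚ L]
    (𝔮 : HeightOneSpectrum (RingOfIntegers L)) (q : ℕ)
    (hq : q.Prime) (hq𝔮 : (q : RingOfIntegers L) ∈ 𝔮.asIdeal)
    (x y tq : ℚ) (hx : ¬ q ∣ x.den) (hy : ¬ q ∣ y.den) (ht : ¬ q ∣ tq.den)
    (ρ : L) (hρ : ρ ^ 2 = algebraMap ℚ L (-tq)) (hnorm : x ^ 2 + tq * y ^ 2 = 1) :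
    𝔮.valuation L (algebraMap ℚ L x + y • ρ) = 1 := by
  set A := algebraMap ℚ L with hA
  set v : Valuation L (WithZero (Multiplicative ℤ)) := 𝔮.valuation L with hv
  have hρ' : ρ ^ 2 = -(A tq) := by rw [hρ, map_neg]
  have hvρ : v ρ ≤ 1 := by
    have h2 : v ρ * v ρ ≤ 1 := by
      have : v (ρ ^ 2) = v ρ * v ρ := by rw [pow_two, v.map_mul]
      rw [← this, hρ']
      have : v (-(A tq)) = v (A tq) := v.map_neg (A tq)
      rw [this]
      exact val_rat_le_one L 𝔮 q hq hq𝔮 tq ht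
    by_contra hgt
    push_neg at hgt
    have : v ρ ≤ v ρ * v ρ := le_mul_of_one_le_right' hgt.le
    exact absurd (le_trans this h2) (not_le.mpr hgt)
  have hn : A (x ^ 2) + A tq * A (y ^ 2) = 1 := by
    have := congrArg A hnorm
    simpa [map_add, map_mul, map_pow, map_one] using this
  have hzz : (A x + y • ρ) * (A x - y • ρ) = 1 := by
    rw [Algebra.smul_def]
    have hx2 : A (x ^ 2) = A x ^ 2 := map_pow _ _ _
    have hy2 : A (y ^ 2) = A y ^ 2 := map_pow _ _ _
    rw [hx2, hy2] at hn
    linear_combination hn - (A y) ^ 2 * hρ'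
  have hvz : v (A x + y • ρ) ≤ 1 := by
    refine le_trans (v.map_add _ _) (max_le ?_ ?_)
    · exact val_rat_le_one L 𝔮 q hq hq𝔮 x hx
    · rw [Algebra.smul_def, v.map_mul]
      calc v (A y) * v ρ ≤ 1 * 1 :=
            mul_le_mul' (val_rat_le_one L 𝔮 q hq hq𝔮 y hy) hvρ
        _ = 1 := one_mul 1
  have hvz' : v (A x - y • ρ) ≤ 1 := by
    refine le_trans (v.map_sub _ _) (max_le ?_ ?_)
    · exact val_rat_le_one L 𝔮 q hq hq𝔮 x hx
    · rw [Algebra.smul_def, v.map_mul]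
      calc v (A y) * v ρ ≤ 1 * 1 :=
            mul_le_mul' (val_rat_le_one L 𝔮 q hq hq𝔮 y hy) hvρ
        _ = 1 := one_mul 1
  have hprod : v (A x + y • ρ) * v (A x - y • ρ) = 1 := by
    rw [← v.map_mul, hzz, v.map_one]
  refine le_antisymm hvz ?_
  calc (1 : WithZero (Multiplicative ℤ)) = v (A x + y • ρ) * v (A x - y • ρ) := hprod.symm
    _ ≤ v (A x + y • ρ) * 1 := mul_le_mul' le_rfl hvz'
    _ = v (A x + y • ρ) := mul_one _

lemma norm_two_eq_one {p : ℕ} [hfp : Fact p.Prime] (hp2 : p ≠ 2) : ‖(2 : ℚ_[p])‖ = 1 := by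
  have h2 : ((2 : ℤ) : ℚ_[p]) = 2 := by push_cast; ring
  refine le_antisymm (by rw [← h2]; exact Padic.norm_int_le_one _) ?_
  by_contra hlt
  push_neg at hlt
  rw [← h2] at hlt
  have := (Padic.norm_intCast_lt_one_iff (k := (2 : ℤ))).mp hlt
  have hdn : p ∣ 2 := by exact_mod_cast this
  exact hp2 ((Nat.prime_dvd_prime_iff_eq hfp.out Nat.prime_two).mp hdn)

lemma padic_estimate {p : ℕ} [hfp : Fact p.Prime] (hp2 : p ≠ 2)
    (a : ℚ_[p]) (ha : a ≠ 0) (t : ℚ_[p]) (ht : ‖t‖ = 1)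
    (ζ : ℚ_[p]) (hζ : ζ ^ 2 = -t) (c d : ℚ_[p]) (e : ℕ) (ε : ℝ)
    (hε : ε ≤ (p : ℝ) ^ (-(e : ℤ) - 1) * (min 1 ‖a‖) ^ 2)
    (hc : ‖c - (a + 1) / 2‖ ≤ ε) (hd : ‖d - (a - 1) / (2 * ζ)‖ ≤ ε) :
    c ^ 2 + t * d ^ 2 ≠ 0 ∧
    ‖((c ^ 2 - t * d ^ 2) / (c ^ 2 + t * d ^ 2)
        + (2 * c * d / (c ^ 2 + t * d ^ 2)) * ζ) * a⁻¹ - 1‖ ≤ (p : ℝ) ^ (-(e : ℤ)) := by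
  have hpR : (1 : ℝ) < (p : ℝ) := by exact_mod_cast hfp.out.one_lt
  have hζn : ‖ζ‖ = 1 := by
    have h1 : ‖ζ‖ ^ 2 = 1 := by
      rw [← norm_pow, hζ, norm_neg, ht]
    nlinarith [norm_nonneg ζ]
  have hζ0 : ζ ≠ 0 := by
    intro h; rw [h] at hζn; simp at hζn
  have h2n : ‖(2 : ℚ_[p])‖ = 1 := norm_two_eq_one hp2
  have h20 : (2 : ℚ_[p]) ≠ 0 := by
    intro h; rw [h] at h2n; simp at h2n
  set m := min 1 ‖a‖ with hm
  have hm0 : 0 < m := lt_min one_pos (norm_pos_iff.mpr ha)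
  have hm1 : m ≤ 1 := min_le_left _ _
  have hma : m ≤ ‖a‖ := min_le_right _ _
  have hppow : (p : ℝ) ^ (-(e : ℤ) - 1) ≤ 1 := by
    apply zpow_le_one_of_nonpos₀ hpR.le
    omega
  have hε1 : ε < m := by
    have : (p : ℝ) ^ (-(e : ℤ) - 1) * m ^ 2 < m := by
      have h1 : (p : ℝ) ^ (-(e : ℤ) - 1) < 1 := by
        apply zpow_lt_one_of_neg₀ hpR (by omega)
      have hm2 : m ^ 2 ≤ m := by nlinarith
      calc (p : ℝ) ^ (-(e : ℤ) - 1) * m ^ 2 < 1 * m ^ 2 := by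
            apply mul_lt_mul_of_pos_right h1 (by positivity)
        _ = m ^ 2 := one_mul _
        _ ≤ m := hm2
    linarith
  have hε0 : (0 : ℝ) ≤ ε := le_trans (norm_nonneg _) hc
  set u := c + d * ζ with hu
  set w := c - d * ζ with hw
  have hua : ‖u - a‖ ≤ ε := by
    have key : u - a = (c - (a + 1) / 2) + (d - (a - 1) / (2 * ζ)) * ζ := by
      field_simp [hu]
      ring
    rw [key]
    refine le_trans (Padic.nonarchimedean _ _) (max_le hc ?_)
    rw [norm_mul, hζn, mul_one]
    exact hd
  have hw1 : ‖w - 1‖ ≤ ε := by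
    have key : w - 1 = (c - (a + 1) / 2) - (d - (a - 1) / (2 * ζ)) * ζ := by
      field_simp [hw]
      ring
    rw [key, sub_eq_add_neg]
    refine le_trans (Padic.nonarchimedean _ _) (max_le hc ?_)
    rw [norm_neg, norm_mul, hζn, mul_one]
    exact hd
  have hwn : ‖w‖ = 1 := by
    have hne : ‖w - 1‖ ≠ ‖(1 : ℚ_[p])‖ := by
      rw [norm_one]
      exact ne_of_lt (lt_of_le_of_lt hw1 (lt_of_lt_of_le hε1 hm1))
    have := Padic.add_eq_max_of_ne (q := w - 1) (r := 1) hne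
    simp only [sub_add_cancel] at this
    rw [this, norm_one]
    exact max_eq_right (le_trans hw1 (le_trans hε1.le hm1))
  have hun : ‖u‖ = ‖a‖ := by
    have hne : ‖u - a‖ ≠ ‖a‖ := by
      exact ne_of_lt (lt_of_le_of_lt hua (lt_of_lt_of_le hε1 hma))
    have := Padic.add_eq_max_of_ne (q := u - a) (r := a) hne
    simp only [sub_add_cancel] at this
    rw [this]
    exact max_eq_right (le_trans hua (le_trans hε1.le hma))
  have hw0 : w ≠ 0 := by
    intro h; rw [h] at hwn; simp at hwn
  have hu0 : u ≠ 0 := by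
    intro h; rw [h] at hun; simp at hun
    exact ha (by rwa [eq_comm, norm_eq_zero] at hun)
  have huw : c ^ 2 + t * d ^ 2 = u * w := by
    rw [hu, hw]
    linear_combination d ^ 2 * hζ
  have hne0 : c ^ 2 + t * d ^ 2 ≠ 0 := by
    rw [huw]; exact mul_ne_zero hu0 hw0
  refine ⟨hne0, ?_⟩
  have hu2 : c ^ 2 - t * d ^ 2 + 2 * c * d * ζ = u * u := by
    rw [hu]
    linear_combination -d ^ 2 * hζ
  have hexpr : ((c ^ 2 - t * d ^ 2) / (c ^ 2 + t * d ^ 2)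
      + (2 * c * d / (c ^ 2 + t * d ^ 2)) * ζ) = u / w := by
    rw [huw]
    have hsplit : (c ^ 2 - t * d ^ 2) / (u * w) + (2 * c * d / (u * w)) * ζ
        = (c ^ 2 - t * d ^ 2 + 2 * c * d * ζ) / (u * w) := by ring
    rw [hsplit, hu2]
    exact mul_div_mul_left u w hu0
  rw [hexpr]
  have hG : u / w * a⁻¹ - 1 = (u - a * w) / (a * w) := by
    field_simp
  rw [hG]
  have hnum : ‖u - a * w‖ ≤ ε * max 1 ‖a‖ := by
    have key : u - a * w = (u - a) - a * (w - 1) := by ring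
    rw [key, sub_eq_add_neg]
    refine le_trans (Padic.nonarchimedean _ _) (max_le ?_ ?_)
    · exact le_trans hua (le_mul_of_one_le_right hε0 (le_max_left _ _))
    · rw [norm_neg, norm_mul]
      calc ‖a‖ * ‖w - 1‖ ≤ ‖a‖ * ε := mul_le_mul_of_nonneg_left hw1 (norm_nonneg _)
        _ = ε * ‖a‖ := mul_comm _ _
        _ ≤ ε * max 1 ‖a‖ := mul_le_mul_of_nonneg_left (le_max_right _ _) hε0
  rw [norm_div, norm_mul, hwn, mul_one]
  rw [div_le_iff₀ (norm_pos_iff.mpr ha)]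
  have hminmax : m * max 1 ‖a‖ = ‖a‖ := by
    rcases le_total 1 ‖a‖ with h | h
    · rw [hm, min_eq_left h, max_eq_right h, one_mul]
    · rw [hm, min_eq_right h, max_eq_left h, mul_one]
  calc ‖u - a * w‖ ≤ ε * max 1 ‖a‖ := hnum
    _ ≤ ((p : ℝ) ^ (-(e : ℤ) - 1) * m ^ 2) * max 1 ‖a‖ := by
        apply mul_le_mul_of_nonneg_right hε (le_trans zero_le_one (le_max_left _ _))
    _ = (p : ℝ) ^ (-(e : ℤ) - 1) * m * (m * max 1 ‖a‖) := by ring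
    _ = (p : ℝ) ^ (-(e : ℤ) - 1) * m * ‖a‖ := by rw [hminmax]
    _ ≤ (p : ℝ) ^ (-(e : ℤ)) * ‖a‖ := by
        apply mul_le_mul_of_nonneg_right _ (norm_nonneg _)
        calc (p : ℝ) ^ (-(e : ℤ) - 1) * m ≤ (p : ℝ) ^ (-(e : ℤ) - 1) * 1 := by
              apply mul_le_mul_of_nonneg_left hm1 (by positivity)
          _ = (p : ℝ) ^ (-(e : ℤ) - 1) := mul_one _
          _ ≤ (p : ℝ) ^ (-(e : ℤ)) := by
              apply zpow_le_zpow_right₀ hpR.le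
              omega

lemma not_dvd_den_of_norm_le_one {p : ℕ} [hfp : Fact p.Prime] (x : ℚ)
    (h : ‖(x : ℚ_[p])‖ ≤ 1) : ¬ p ∣ x.den := by
  intro hdvd
  have hx0 : x ≠ 0 := by
    intro h0
    rw [h0] at hdvd
    simp at hdvd
    exact hfp.out.ne_one hdvd
  have hnum : ¬ (p : ℤ) ∣ x.num := by
    intro hn
    have h1 : p ∣ x.num.natAbs := Int.natCast_dvd_natCast.mp (by
      rcases Int.natAbs_eq x.num with he | he
      · rwa [he] at hn
      · rw [he] at hn; exact (dvd_neg.mp hn))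
    have h2 := x.reduced
    have : p ∣ Nat.gcd x.num.natAbs x.den := Nat.dvd_gcd h1 hdvd
    rw [h2] at this
    exact hfp.out.ne_one (Nat.dvd_one.mp this)
  have hcast : (x : ℚ_[p]) = (x.num : ℚ_[p]) / (x.den : ℚ_[p]) := by
    rw [← Rat.num_div_den x]
    push_cast
    rw [Rat.num_div_den]
  have hnnorm : ‖((x.num : ℤ) : ℚ_[p])‖ = 1 := by
    refine le_antisymm (Padic.norm_int_le_one _) ?_
    by_contra hlt
    push_neg at hlt
    exact hnum (Padic.norm_intCast_lt_one_iff.mp hlt)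
  have hdnorm : ‖((x.den : ℤ) : ℚ_[p])‖ < 1 :=
    Padic.norm_intCast_lt_one_iff.mpr (Int.natCast_dvd_natCast.mpr hdvd)
  have hd0 : ((x.den : ℤ) : ℚ_[p]) ≠ 0 := by
    have : (x.den : ℤ) ≠ 0 := by exact_mod_cast x.den_nz
    simpa using this
  have hdpos : 0 < ‖((x.den : ℤ) : ℚ_[p])‖ := norm_pos_iff.mpr hd0
  have : ‖(x : ℚ_[p])‖ = 1 / ‖((x.den : ℤ) : ℚ_[p])‖ := by
    rw [hcast]
    rw [norm_div]
    push_cast at hnnorm ⊢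
    rw [hnnorm]
  rw [this] at h
  have : (1 : ℝ) < 1 / ‖((x.den : ℤ) : ℚ_[p])‖ := by
    rw [lt_div_iff₀ hdpos, one_mul]
    exact hdnorm
  linarith

lemma padic_integral {p : ℕ} [hfp : Fact p.Prime] (t : ℚ_[p]) (ht : ‖t‖ ≤ 1)
    (c d : ℚ_[p]) (hc : ‖c - 1‖ < 1) (hd : ‖d‖ < 1) :
    c ^ 2 + t * d ^ 2 ≠ 0 ∧ ‖(c ^ 2 - t * d ^ 2) / (c ^ 2 + t * d ^ 2)‖ ≤ 1 ∧
      ‖2 * c * d / (c ^ 2 + t * d ^ 2)‖ ≤ 1 := by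
  have hcn : ‖c‖ = 1 := by
    have hne : ‖c - 1‖ ≠ ‖(1 : ℚ_[p])‖ := by rw [norm_one]; exact ne_of_lt hc
    have := Padic.add_eq_max_of_ne (q := c - 1) (r := 1) hne
    simp only [sub_add_cancel] at this
    rw [this, norm_one]
    exact max_eq_right hc.le
  have htd : ‖t * d ^ 2‖ < 1 := by
    rw [norm_mul, norm_pow]
    calc ‖t‖ * ‖d‖ ^ 2 ≤ 1 * ‖d‖ ^ 2 := by
          apply mul_le_mul_of_nonneg_right ht (by positivity)
      _ = ‖d‖ ^ 2 := one_mul _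
      _ ≤ ‖d‖ * 1 := by nlinarith [norm_nonneg d, hd]
      _ < 1 := by rw [mul_one]; exact hd
  have hden : ‖c ^ 2 + t * d ^ 2‖ = 1 := by
    have hc2 : ‖c ^ 2‖ = 1 := by rw [norm_pow, hcn, one_pow]
    have hne : ‖c ^ 2‖ ≠ ‖t * d ^ 2‖ := by rw [hc2]; exact (ne_of_lt htd).symm
    rw [Padic.add_eq_max_of_ne hne, hc2]
    exact max_eq_left (le_of_lt (hc2 ▸ htd))
  have hden0 : c ^ 2 + t * d ^ 2 ≠ 0 := by
    intro h0; rw [h0] at hden; simp at hden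
  refine ⟨hden0, ?_, ?_⟩
  · rw [norm_div, hden, div_one, sub_eq_add_neg]
    refine le_trans (Padic.nonarchimedean _ _) (max_le ?_ ?_)
    · rw [norm_pow, hcn, one_pow]
    · rw [norm_neg]; exact htd.le
  · rw [norm_div, hden, div_one]
    have h2 : ‖(2 : ℚ_[p])‖ ≤ 1 := by
      have : ((2 : ℤ) : ℚ_[p]) = 2 := by push_cast; ring
      rw [← this]; exact Padic.norm_int_le_one _
    rw [norm_mul, norm_mul, hcn]
    calc ‖(2:ℚ_[p])‖ * 1 * ‖d‖ ≤ 1 * 1 * 1 := by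
          apply mul_le_mul (by simpa using h2) hd.le (norm_nonneg _) (by norm_num)
    _ = 1 := by norm_num

lemma coprime_rep (c d : ℚ) (hc : c ≠ 0) :
    ∃ (C D : ℤ) (lam : ℚ), lam ≠ 0 ∧ c = lam * C ∧ d = lam * D ∧ Int.gcd C D = 1 := by
  set C₀ : ℤ := c.num * d.den with hC₀
  set D₀ : ℤ := d.num * c.den with hD₀
  have hC₀0 : C₀ ≠ 0 := by
    simp [hC₀, Rat.num_ne_zero.mpr hc, d.den_nz]
  set g : ℤ := (Int.gcd C₀ D₀ : ℤ) with hg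
  have hg0 : g ≠ 0 := by
    simp only [hg]
    exact_mod_cast fun h => hC₀0 (Int.gcd_eq_zero_iff.mp (by exact_mod_cast h)).1
  obtain ⟨C, hC⟩ : g ∣ C₀ := Int.gcd_dvd_left _ _
  obtain ⟨D, hD⟩ : g ∣ D₀ := Int.gcd_dvd_right _ _
  have hcop : Int.gcd C D = 1 := by
    have h1 : Int.gcd C₀ D₀ = g.natAbs * Int.gcd C D := by
      rw [hC, hD, Int.gcd_mul_left]
    have h2 : g.natAbs = Int.gcd C₀ D₀ := by simp [hg]
    rw [← h2] at h1
    have h3 : 0 < g.natAbs := Nat.pos_of_ne_zero (Int.natAbs_ne_zero.mpr hg0)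
    exact (Nat.mul_eq_left h3.ne').mp h1.symm
  have hdd : ((c.den * d.den : ℕ) : ℚ) ≠ 0 := by
    exact_mod_cast Nat.mul_ne_zero c.den_nz d.den_nz
  have hnumc : (c.num : ℚ) = c * (c.den : ℚ) := by
    rw [← div_eq_iff (by exact_mod_cast c.den_nz), Rat.num_div_den]
  have hnumd : (d.num : ℚ) = d * (d.den : ℚ) := by
    rw [← div_eq_iff (by exact_mod_cast d.den_nz), Rat.num_div_den]
  refine ⟨C, D, (g : ℚ) / ((c.den * d.den : ℕ) : ℚ), ?_, ?_, ?_, hcop⟩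
  · exact div_ne_zero (by exact_mod_cast hg0) hdd
  · rw [div_mul_eq_mul_div, eq_div_iff hdd]
    have : ((C₀ : ℤ) : ℚ) = ((g * C : ℤ) : ℚ) := congrArg Int.cast hC
    push_cast at this
    push_cast
    rw [← this, hC₀]
    push_cast
    rw [hnumc]
    ring
  · rw [div_mul_eq_mul_div, eq_div_iff hdd]
    have : ((D₀ : ℤ) : ℚ) = ((g * D : ℤ) : ℚ) := congrArg Int.cast hD
    push_cast at this
    push_cast
    rw [← this, hD₀]
    push_cast
    rw [hnumd]
    ring

lemma denom_qr (t : ℕ) (c d : ℚ) (hc : c ≠ 0) (hden : c ^ 2 + (t : ℚ) * d ^ 2 ≠ 0)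
    (q : ℕ) (hq : q.Prime)
    (hdvd : q ∣ ((c ^ 2 - (t : ℚ) * d ^ 2) / (c ^ 2 + (t : ℚ) * d ^ 2) : ℚ).den ∨
      q ∣ ((2 * c * d / (c ^ 2 + (t : ℚ) * d ^ 2)) : ℚ).den)
    (hqt : ¬ (q : ℤ) ∣ (t : ℤ)) :
    ∃ u : ℤ, (q : ℤ) ∣ u ^ 2 + t ∧ ¬ (q : ℤ) ∣ u := by
  obtain ⟨C, D, lam, hlam, hcc, hdc, hcop⟩ := coprime_rep c d hc
  set den : ℤ := C ^ 2 + (t : ℤ) * D ^ 2 with hdenI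
  have hC0 : C ≠ 0 := by
    intro h; apply hc; rw [hcc, h]; simp
  have hden0 : den ≠ 0 := by
    have h1 : (0 : ℤ) < C ^ 2 := by positivity
    have h2 : (0 : ℤ) ≤ (t : ℤ) * D ^ 2 := by positivity
    omega
  have hlam2 : lam ^ 2 ≠ 0 := pow_ne_zero 2 hlam
  have hdenQ : c ^ 2 + (t : ℚ) * d ^ 2 = lam ^ 2 * ((den : ℤ) : ℚ) := by
    rw [hcc, hdc, hdenI]; push_cast; ring
  have hdenQ0 : ((den : ℤ) : ℚ) ≠ 0 := by exact_mod_cast hden0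
  -- x and y as integer fractions
  have hx : (c ^ 2 - (t : ℚ) * d ^ 2) / (c ^ 2 + (t : ℚ) * d ^ 2)
      = ((C ^ 2 - (t : ℤ) * D ^ 2 : ℤ) : ℚ) / ((den : ℤ) : ℚ) := by
    rw [hdenQ, hcc, hdc]
    push_cast
    field_simp
  have hy : (2 * c * d / (c ^ 2 + (t : ℚ) * d ^ 2) : ℚ)
      = ((2 * C * D : ℤ) : ℚ) / ((den : ℤ) : ℚ) := by
    rw [hdenQ, hcc, hdc]
    push_cast
    field_simp
  have hqden : (q : ℤ) ∣ den := by
    rcases hdvd with h | h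
    · have hdd : (((c ^ 2 - (t : ℚ) * d ^ 2) / (c ^ 2 + (t : ℚ) * d ^ 2) : ℚ).den : ℤ) ∣ den := by
        rw [hx, ← Rat.divInt_eq_div]
        exact Rat.den_dvd _ _
      exact dvd_trans (Int.natCast_dvd_natCast.mpr h) hdd
    · have hdd : (((2 * c * d / (c ^ 2 + (t : ℚ) * d ^ 2)) : ℚ).den : ℤ) ∣ den := by
        rw [hy, ← Rat.divInt_eq_div]
        exact Rat.den_dvd _ _
      exact dvd_trans (Int.natCast_dvd_natCast.mpr h) hdd
  have hqD : ¬ (q : ℤ) ∣ D := by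
    intro hD
    have hqC2 : (q : ℤ) ∣ C ^ 2 := by
      have : C ^ 2 = den - (t : ℤ) * D ^ 2 := by rw [hdenI]; ring
      rw [this]
      have hD2 : (q : ℤ) ∣ D ^ 2 := dvd_pow hD (by norm_num)
      exact dvd_sub hqden (Dvd.dvd.mul_left hD2 _)
    have hqC : (q : ℤ) ∣ C := Int.Prime.dvd_pow' hq hqC2
    have : (q : ℤ) ∣ (Int.gcd C D : ℤ) := Int.dvd_coe_gcd hqC hD
    rw [hcop] at this
    have : (q : ℤ) ∣ 1 := this
    have := Int.eq_one_of_dvd_one (by positivity) this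
    exact_mod_cast hq.ne_one (by exact_mod_cast this)
  have hcopDq : IsCoprime (D : ℤ) (q : ℤ) := by
    rw [Int.isCoprime_iff_gcd_eq_one]
    rcases (Nat.Prime.eq_one_or_self_of_dvd hq (Int.gcd D q) (by
      have : (Int.gcd D q : ℤ) ∣ (q : ℤ) := Int.gcd_dvd_right _ _
      exact_mod_cast this)) with h | h
    · exact h
    · exfalso
      apply hqD
      have : (Int.gcd D q : ℤ) ∣ D := Int.gcd_dvd_left _ _
      rwa [h] at this
  obtain ⟨a, b, hab⟩ := hcopDq
  refine ⟨C * a, ?_, ?_⟩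
  · have hkey : (C * a) ^ 2 + (t : ℤ) = a ^ 2 * den - (t : ℤ) * (D * a - 1) * (D * a + 1) := by
      rw [hdenI]; ring
    rw [hkey]
    have h1 : (q : ℤ) ∣ a ^ 2 * den := Dvd.dvd.mul_left hqden _
    have h2 : (q : ℤ) ∣ (t : ℤ) * (D * a - 1) * (D * a + 1) := by
      have : D * a - 1 = -(b * q) := by linarith [hab]
      exact Dvd.dvd.mul_right (Dvd.dvd.mul_left (this ▸ ⟨-b, by ring⟩) _) _
    exact dvd_sub h1 h2
  · intro hu
    apply hqt
    have h1 : (q : ℤ) ∣ (C * a) ^ 2 := dvd_pow hu (by norm_num)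
    have h2 : (q : ℤ) ∣ (C * a) ^ 2 + (t : ℤ) := by
      have hkey : (C * a) ^ 2 + (t : ℤ) = a ^ 2 * den - (t : ℤ) * (D * a - 1) * (D * a + 1) := by
        rw [hdenI]; ring
      rw [hkey]
      have h1' : (q : ℤ) ∣ a ^ 2 * den := Dvd.dvd.mul_left hqden _
      have h2' : (q : ℤ) ∣ (t : ℤ) * (D * a - 1) * (D * a + 1) := by
        have hh : D * a - 1 = -(b * q) := by linarith [hab]
        exact Dvd.dvd.mul_right (Dvd.dvd.mul_left (hh ▸ ⟨-b, by ring⟩) _) _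
      exact dvd_sub h1' h2'
    have : (q : ℤ) ∣ ((C * a) ^ 2 + (t : ℤ)) - (C * a) ^ 2 := dvd_sub h2 h1
    simpa using this

open scoped Classical in
open Polynomial IsDedekindDomain NumberField in
lemma stage (a : ℚ) (ha : a ≠ 0) (tN : ℕ) (ht1 : 1 < tN)
    (SI X : Finset ℕ)
    (hSI : ∀ p ∈ SI, p.Prime ∧ p ≠ 2 ∧ ¬ p ∣ tN) (hX : ∀ p ∈ X, p.Prime)
    (hdisj : ∀ p ∈ SI, p ∉ X)
    (hXU : tN.primeFactors ⊆ X)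
    (E : ℕ → ℕ)
    (ζS : ∀ (p : ℕ) (hp : p.Prime), @PadicInt p ⟨hp⟩)
    (hζS : ∀ (p : ℕ) (hp : p.Prime), p ∈ SI →
      letI : Fact p.Prime := ⟨hp⟩
      ((ζS p hp : ℚ_[p]) ^ 2 = -(tN : ℚ_[p]))) :
    ∃ x y : ℚ,
      x ^ 2 + (tN : ℚ) * y ^ 2 = 1 ∧
      (∀ (p : ℕ) (hp : p.Prime), p ∈ SI →
        letI : Fact p.Prime := ⟨hp⟩
        ‖((x : ℚ_[p]) + (y : ℚ_[p]) * (ζS p hp : ℚ_[p])) * ((a : ℚ_[p]))⁻¹ - 1‖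
          ≤ (p : ℝ) ^ (-(E p : ℤ))) ∧
      (∀ q ∈ X, ¬ q ∣ x.den ∧ ¬ q ∣ y.den) ∧
      (∀ q : ℕ, q.Prime → (q ∣ x.den ∨ q ∣ y.den) → q ∉ SI →
        (¬ q ∣ tN ∧ ∃ u : ℤ, (q : ℤ) ∣ u ^ 2 + tN ∧ ¬ (q : ℤ) ∣ u)) := by
  classical
  set W : Finset ℕ := SI ∪ X with hW
  have hWp : ∀ p ∈ W, p.Prime := by
    intro p hp
    rcases Finset.mem_union.mp hp with h | h
    · exact (hSI p h).1
    · exact hX p h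
  set ε : ℕ → ℝ := fun p =>
    if h : p.Prime then
      (letI : Fact p.Prime := ⟨h⟩
       if p ∈ SI then (p : ℝ) ^ (-(E p : ℤ) - 1) * (min 1 ‖(a : ℚ_[p])‖) ^ 2
       else (p : ℝ)⁻¹)
    else 1 with hε
  have hεpos : ∀ p ∈ W, 0 < ε p := by
    intro p hp
    have hpp := hWp p hp
    haveI : Fact p.Prime := ⟨hpp⟩
    have hppos : (0 : ℝ) < p := by exact_mod_cast hpp.pos
    simp only [hε, dif_pos hpp]
    by_cases hSIp : p ∈ SI
    · rw [if_pos hSIp]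
      have ha' : ((a : ℚ_[p])) ≠ 0 := by
        exact_mod_cast (Rat.cast_ne_zero (α := ℚ_[p])).mpr ha
      have h1 : 0 < min 1 ‖(a : ℚ_[p])‖ := lt_min one_pos (norm_pos_iff.mpr ha')
      positivity
    · rw [if_neg hSIp]
      positivity
  set bc : ∀ (p : ℕ) (hp : p.Prime), @Padic p ⟨hp⟩ := fun p hp =>
    letI : Fact p.Prime := ⟨hp⟩
    if p ∈ SI then ((a : ℚ_[p]) + 1) / 2 else 1 with hbc
  set bd : ∀ (p : ℕ) (hp : p.Prime), @Padic p ⟨hp⟩ := fun p hp =>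
    letI : Fact p.Prime := ⟨hp⟩
    if p ∈ SI then ((a : ℚ_[p]) - 1) / (2 * (ζS p hp : ℚ_[p])) else 0 with hbd
  obtain ⟨c, hc⟩ := simul_approx W hWp bc ε hεpos
  obtain ⟨d, hd⟩ := simul_approx W hWp bd ε hεpos
  -- the auxiliary prime q₀ dividing tN
  obtain ⟨q₀, hq₀p, hq₀t⟩ := Nat.exists_prime_and_dvd (show tN ≠ 1 by omega)
  have hq₀X : q₀ ∈ X := hXU (Nat.mem_primeFactors.mpr ⟨hq₀p, hq₀t, by omega⟩)
  have hq₀SI : q₀ ∉ SI := fun h => (hSI q₀ h).2.2 hq₀t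
  have hq₀W : q₀ ∈ W := Finset.mem_union_right _ hq₀X
  haveI : Fact q₀.Prime := ⟨hq₀p⟩
  have hq₀inv : (q₀ : ℝ)⁻¹ < 1 := by
    rw [inv_lt_one_iff₀]; right; exact_mod_cast hq₀p.one_lt
  have hc0 : c ≠ 0 := by
    intro h0
    have := hc q₀ hq₀p hq₀W
    rw [h0] at this
    simp only [hbc, if_neg hq₀SI, hε, dif_pos hq₀p, if_neg hq₀SI] at this
    rw [Rat.cast_zero, zero_sub, norm_neg, norm_one] at this
    linarith
  -- nonzero denominator
  have hc2pos : (0:ℚ) < c ^ 2 := lt_of_le_of_ne (sq_nonneg c) (Ne.symm (pow_ne_zero 2 hc0))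
  have hdenpos : (0:ℚ) < c ^ 2 + (tN : ℚ) * d ^ 2 := by
    have h2 : (0:ℚ) ≤ (tN : ℚ) * d ^ 2 := by positivity
    linarith
  have hden0 : c ^ 2 + (tN : ℚ) * d ^ 2 ≠ 0 := ne_of_gt hdenpos
  set x : ℚ := (c ^ 2 - (tN : ℚ) * d ^ 2) / (c ^ 2 + (tN : ℚ) * d ^ 2) with hxdef
  set y : ℚ := 2 * c * d / (c ^ 2 + (tN : ℚ) * d ^ 2) with hydef
  have hnorm1 : x ^ 2 + (tN : ℚ) * y ^ 2 = 1 := by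
    rw [hxdef, hydef]
    field_simp
    ring
  -- integrality at X primes
  have hint : ∀ q ∈ X, ¬ q ∣ x.den ∧ ¬ q ∣ y.den := by
    intro q hq
    have hqp := hX q hq
    haveI : Fact q.Prime := ⟨hqp⟩
    have hqSI : q ∉ SI := fun h => hdisj q h hq
    have hqW : q ∈ W := Finset.mem_union_right _ hq
    have hqinv : (q : ℝ)⁻¹ < 1 := by
      rw [inv_lt_one_iff₀]; right; exact_mod_cast hqp.one_lt
    have hcq : ‖(c : ℚ_[q]) - 1‖ < 1 := by
      have := hc q hqp hqW
      simp only [hbc, if_neg hqSI, hε, dif_pos hqp, if_neg hqSI] at this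
      exact lt_of_le_of_lt this hqinv
    have hdq : ‖(d : ℚ_[q])‖ < 1 := by
      have := hd q hqp hqW
      simp only [hbd, if_neg hqSI, hε, dif_pos hqp, if_neg hqSI] at this
      rw [sub_zero] at this
      exact lt_of_le_of_lt this hqinv
    have htle : ‖((tN : ℕ) : ℚ_[q])‖ ≤ 1 := by
      have : ((tN : ℤ) : ℚ_[q]) = ((tN : ℕ) : ℚ_[q]) := by push_cast; ring
      rw [← this]; exact Padic.norm_int_le_one _
    obtain ⟨hne0, hx1, hy1⟩ := padic_integral ((tN : ℕ) : ℚ_[q]) htle (c : ℚ_[q]) (d : ℚ_[q]) hcq hdq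
    constructor
    · apply not_dvd_den_of_norm_le_one (p := q) x
      have hxcast : ((x : ℚ) : ℚ_[q]) = ((c:ℚ_[q]) ^ 2 - ((tN:ℕ) : ℚ_[q]) * (d:ℚ_[q]) ^ 2)
          / ((c:ℚ_[q]) ^ 2 + ((tN:ℕ) : ℚ_[q]) * (d:ℚ_[q]) ^ 2) := by
        rw [hxdef]; push_cast; ring
      rw [hxcast]
      exact hx1
    · apply not_dvd_den_of_norm_le_one (p := q) y
      have hycast : ((y : ℚ) : ℚ_[q]) = (2 * (c:ℚ_[q]) * (d:ℚ_[q]))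
          / ((c:ℚ_[q]) ^ 2 + ((tN:ℕ) : ℚ_[q]) * (d:ℚ_[q]) ^ 2) := by
        rw [hydef]; push_cast; ring
      rw [hycast]
      exact hy1
  refine ⟨x, y, hnorm1, ?_, hint, ?_⟩
  · -- approximation at SI primes
    intro p hp hpSI
    haveI : Fact p.Prime := ⟨hp⟩
    have hpW : p ∈ W := Finset.mem_union_left _ hpSI
    obtain ⟨hpp, hp2, hpt⟩ := hSI p hpSI
    have ha' : ((a : ℚ_[p])) ≠ 0 := (Rat.cast_ne_zero (α := ℚ_[p])).mpr ha
    have htn : ‖((tN : ℕ) : ℚ_[p])‖ = 1 := by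
      have hcast : ((tN : ℤ) : ℚ_[p]) = ((tN : ℕ) : ℚ_[p]) := by push_cast; ring
      rw [← hcast]
      refine le_antisymm (Padic.norm_int_le_one _) ?_
      by_contra hlt
      push_neg at hlt
      have := Padic.norm_intCast_lt_one_iff.mp hlt
      exact hpt (by exact_mod_cast this)
    have hζp := hζS p hp hpSI
    have hcp : ‖(c : ℚ_[p]) - ((a:ℚ_[p]) + 1) / 2‖
        ≤ (p : ℝ) ^ (-(E p : ℤ) - 1) * (min 1 ‖(a : ℚ_[p])‖) ^ 2 := by
      have := hc p hp hpW
      simp only [hbc, if_pos hpSI, hε, dif_pos hp, if_pos hpSI] at this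
      exact this
    have hdp : ‖(d : ℚ_[p]) - ((a:ℚ_[p]) - 1) / (2 * (ζS p hp : ℚ_[p]))‖
        ≤ (p : ℝ) ^ (-(E p : ℤ) - 1) * (min 1 ‖(a : ℚ_[p])‖) ^ 2 := by
      have := hd p hp hpW
      simp only [hbd, if_pos hpSI, hε, dif_pos hp, if_pos hpSI] at this
      exact this
    obtain ⟨hne0, hest⟩ := padic_estimate hp2 (a : ℚ_[p]) ha' ((tN:ℕ) : ℚ_[p]) htn
      (ζS p hp : ℚ_[p]) hζp (c : ℚ_[p]) (d : ℚ_[p]) (E p) _ le_rfl hcp hdp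
    have hxcast : ((x : ℚ) : ℚ_[p]) = ((c:ℚ_[p]) ^ 2 - ((tN:ℕ) : ℚ_[p]) * (d:ℚ_[p]) ^ 2)
        / ((c:ℚ_[p]) ^ 2 + ((tN:ℕ) : ℚ_[p]) * (d:ℚ_[p]) ^ 2) := by
      rw [hxdef]; push_cast; ring
    have hycast : ((y : ℚ) : ℚ_[p]) = (2 * (c:ℚ_[p]) * (d:ℚ_[p]))
        / ((c:ℚ_[p]) ^ 2 + ((tN:ℕ) : ℚ_[p]) * (d:ℚ_[p]) ^ 2) := by
      rw [hydef]; push_cast; ring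
    rw [hxcast, hycast]
    exact hest
  · -- QR info at denominator primes
    intro q hqp hdvd hqSI
    have hqX : q ∉ X := by
      intro hqX
      rcases hdvd with h | h
      · exact (hint q hqX).1 h
      · exact (hint q hqX).2 h
    have hqt : ¬ q ∣ tN := by
      intro h
      exact hqX (hXU (Nat.mem_primeFactors.mpr ⟨hqp, h, by omega⟩))
    refine ⟨hqt, ?_⟩
    exact denom_qr tN c d hc0 hden0 q hqp hdvd (by exact_mod_cast hqt)

theorem stmt15 (a₁ a₂ : ℚ) (ha₁ : a₁ ≠ 0) (ha₂ : a₂ ≠ 0)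
    (I : Ideal ↥Zhalf) (hI : I ≠ ⊥) :
    ∃ (t : ↥Zhalf) (x₁ y₁ x₂ y₂ : ℚ) (R₁ R₂ : Finset ℕ)
      (ζ : ∀ (p : ℕ) (hp : p.Prime), @PadicInt p ⟨hp⟩),
      0 < (t : ℚ) ∧
      x₁ ^ 2 + (t : ℚ) * y₁ ^ 2 = 1 ∧ x₂ ^ 2 + (t : ℚ) * y₂ ^ 2 = 1 ∧
      (∀ p ∈ R₁, Nat.Prime p ∧ p ≠ 2) ∧ (∀ p ∈ R₂, Nat.Prime p ∧ p ≠ 2) ∧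
      -- the given square roots of `−t` over the primes in `P(I) ∪ R₁ ∪ R₂`
      (∀ (p : ℕ) (hp : p.Prime), p ≠ 2 →
        (I ≤ Ideal.span {(p : ↥Zhalf)} ∨ p ∈ R₁ ∨ p ∈ R₂) →
        letI : Fact p.Prime := ⟨hp⟩
        (ζ p hp : ℚ_[p]) ^ 2 = -(((t : ℚ) : ℚ_[p]))) ∧
      -- (1): for `i = 1,2` and every `p ∈ P(I)`, `v_p((xᵢ + yᵢ ζ_p) aᵢ⁻¹ − 1) ≥ v_p(I)`
      (∀ (p : ℕ) (hp : p.Prime), p ≠ 2 → I ≤ Ideal.span {(p : ↥Zhalf)} →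
        letI : Fact p.Prime := ⟨hp⟩
        ∀ e : ℕ, I ≤ Ideal.span {(p : ↥Zhalf)} ^ e →
          ‖((x₁ : ℚ_[p]) + (y₁ : ℚ_[p]) * (ζ p hp : ℚ_[p])) * ((a₁ : ℚ_[p]))⁻¹ - 1‖
              ≤ (p : ℝ) ^ (-(e : ℤ)) ∧
          ‖((x₂ : ℚ_[p]) + (y₂ : ℚ_[p]) * (ζ p hp : ℚ_[p])) * ((a₂ : ℚ_[p]))⁻¹ - 1‖
              ≤ (p : ℝ) ^ (-(e : ℤ))) ∧
      -- (2): the sets `P(I)`, `R₁`, `R₂`, `P(t)` are pairwise disjoint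
      (∀ p : ℕ, p.Prime → p ≠ 2 →
        (I ≤ Ideal.span {(p : ↥Zhalf)} → p ∉ R₁) ∧
        (I ≤ Ideal.span {(p : ↥Zhalf)} → p ∉ R₂) ∧
        (I ≤ Ideal.span {(p : ↥Zhalf)} → ¬ 0 < padicValRat p (t : ℚ)) ∧
        (p ∈ R₁ → p ∉ R₂) ∧
        (p ∈ R₁ → ¬ 0 < padicValRat p (t : ℚ)) ∧
        (p ∈ R₂ → ¬ 0 < padicValRat p (t : ℚ))) ∧
      -- (3): in `L = ℚ(√−t)` with `zᵢ = xᵢ + yᵢ √−t`, for every odd prime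
      -- `q ∉ P(I) ∪ Rᵢ` and every prime `𝔮` of the ring of integers of `L` over `q`,
      -- the `𝔮`-adic valuation of `zᵢ` is `0`
      (∀ (L : Type) (_ : Field L) (_ : NumberField L) (_ : Algebra ℚ L) (ρ : L),
        ρ ^ 2 = algebraMap ℚ L (-(t : ℚ)) →
        (∀ z : L, z ∈ Algebra.adjoin ℚ {ρ}) →
        ∀ (q : ℕ), q.Prime → q ≠ 2 →
          ∀ 𝔮 : IsDedekindDomain.HeightOneSpectrum (NumberField.RingOfIntegers L),
            ((q : NumberField.RingOfIntegers L) ∈ 𝔮.asIdeal) →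
            ((¬ I ≤ Ideal.span {(q : ↥Zhalf)} → q ∉ R₁ →
                𝔮.valuation L (algebraMap ℚ L x₁ + y₁ • ρ) = 1) ∧
             (¬ I ≤ Ideal.span {(q : ↥Zhalf)} → q ∉ R₂ →
                𝔮.valuation L (algebraMap ℚ L x₂ + y₂ • ρ) = 1))) := by
  classical
  obtain ⟨g, hgI, hg0⟩ := Submodule.exists_mem_ne_zero_of_ne_bot hI
  obtain ⟨mz, k, hgrep⟩ := Zhalf_mem (g : ℚ) g.2
  have hmz0 : mz ≠ 0 := by
    intro h
    apply hg0
    have : (g : ℚ) = 0 := by rw [hgrep, h]; simp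
    exact Subtype.ext this
  set m : ℕ := mz.natAbs with hm
  have hm0 : m ≠ 0 := Int.natAbs_ne_zero.mpr hmz0
  have hkey : ∀ (p : ℕ), p.Prime → p ≠ 2 → ∀ e : ℕ,
      I ≤ Ideal.span {(p : ↥Zhalf)} ^ e → p ^ e ∣ m := by
    intro p hp hp2 e hle
    have hg' : g ∈ Ideal.span {(p : ↥Zhalf)} ^ e := hle hgI
    rw [Ideal.span_singleton_pow, Ideal.mem_span_singleton] at hg'
    have hdz := Zhalf_pow_dvd hp hp2 e hg' mz k hgrep
    have h2 : ((p ^ e : ℕ) : ℤ) ∣ mz := by push_cast; exact hdz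
    exact Int.natCast_dvd.mp h2
  set S : Finset ℕ := m.primeFactors.erase 2 with hSdef
  have hS : ∀ p ∈ S, p.Prime ∧ p ≠ 2 ∧ p ∣ m := by
    intro p hp
    obtain ⟨hp2, hpf⟩ := Finset.mem_erase.mp hp
    obtain ⟨hpp, hpd, -⟩ := Nat.mem_primeFactors.mp hpf
    exact ⟨hpp, hp2, hpd⟩
  have hmemS : ∀ p : ℕ, p.Prime → p ≠ 2 → I ≤ Ideal.span {(p : ↥Zhalf)} → p ∈ S := by
    intro p hp hp2 hle
    have := hkey p hp hp2 1 (by simpa [pow_one] using hle)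
    rw [pow_one] at this
    exact Finset.mem_erase.mpr ⟨hp2, Nat.mem_primeFactors.mpr ⟨hp, this, hm0⟩⟩
  set SI : Finset ℕ := S.filter (fun p => I ≤ Ideal.span {(p : ↥Zhalf)}) with hSIdef
  have hSIS : SI ⊆ S := Finset.filter_subset _ _
  set T : Finset ℕ := insert 3 S with hTdef
  have hT : ∀ p ∈ T, p.Prime := by
    intro p hp
    rcases Finset.mem_insert.mp hp with rfl | h
    · norm_num
    · exact (hS p h).1
  set P : ℕ := ∏ p ∈ T, p with hPdef
  have hP3 : 3 ≤ P := by
    exact Finset.single_le_prod' (fun i hi => (hT i hi).one_lt.le) (Finset.mem_insert_self 3 S)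
  set tN : ℕ := 2 * P - 1 with htNdef
  have htP : tN + 1 = 2 * P := by omega
  have ht1 : 1 < tN := by omega
  have htN0 : tN ≠ 0 := by omega
  have hTt : ∀ p ∈ T, ¬ p ∣ tN := by
    intro p hp hdvd
    have h1 : p ∣ P := Finset.dvd_prod_of_mem _ hp
    have h2 : p ∣ tN + 1 := htP ▸ Dvd.dvd.mul_left h1 2
    have h3 := Nat.dvd_sub h2 hdvd
    have h4 : tN + 1 - tN = 1 := by omega
    rw [h4] at h3
    exact (hT p hp).ne_one (Nat.dvd_one.mp h3)
  have htodd : ¬ 2 ∣ tN := by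
    intro h
    omega
  have hStN : ∀ p ∈ S, ¬ p ∣ tN := fun p hp => hTt p (Finset.mem_insert_of_mem hp)
  have hSdvd : ∀ p ∈ S, p ∣ tN + 1 := by
    intro p hp
    rw [htP]
    exact Dvd.dvd.mul_left (Finset.dvd_prod_of_mem _ (Finset.mem_insert_of_mem hp)) 2
  set U : Finset ℕ := tN.primeFactors with hUdef
  have hU : ∀ q ∈ U, q.Prime ∧ q ∣ tN := by
    intro q hq
    obtain ⟨h1, h2, -⟩ := Nat.mem_primeFactors.mp hq
    exact ⟨h1, h2⟩
  -- square roots of -tN at SI primes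
  have hζSex : ∀ (p : ℕ) (hp : p.Prime), ∃ z : @PadicInt p ⟨hp⟩, p ∈ SI →
      (letI : Fact p.Prime := ⟨hp⟩
       (z : ℚ_[p]) ^ 2 = -((tN : ℕ) : ℚ_[p])) := by
    intro p hp
    by_cases hpSI : p ∈ SI
    · haveI : Fact p.Prime := ⟨hp⟩
      have hpS : p ∈ S := hSIS hpSI
      obtain ⟨-, hp2, -⟩ := hS p hpS
      have hdvd : (p : ℤ) ∣ 1 ^ 2 + (tN : ℤ) := by
        have := hSdvd p hpS
        have h2 : (p : ℤ) ∣ ((tN + 1 : ℕ) : ℤ) := Int.natCast_dvd_natCast.mpr this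
        push_cast at h2
        convert h2 using 1
        ring
      obtain ⟨z, hz⟩ := exists_padic_sqrt (p := p) hp2 (tN : ℤ) 1 hdvd (by
        intro hdd
        exact hp.ne_one (by exact_mod_cast Int.eq_one_of_dvd_one (by positivity) hdd))
      refine ⟨z, fun _ => ?_⟩
      rw [hz]
      push_cast
      ring
    · exact ⟨0, fun h => absurd h hpSI⟩
  choose ζS hζS using hζSex
  -- the exponent function
  set E : ℕ → ℕ := fun p => m.factorization p with hEdef
  have hSIh : ∀ p ∈ SI, p.Prime ∧ p ≠ 2 ∧ ¬ p ∣ tN := by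
    intro p hp
    obtain ⟨h1, h2, -⟩ := hS p (hSIS hp)
    exact ⟨h1, h2, hStN p (hSIS hp)⟩
  -- stage 1
  set X₁ : Finset ℕ := (S \ SI) ∪ U with hX₁def
  have hX₁p : ∀ p ∈ X₁, p.Prime := by
    intro p hp
    rcases Finset.mem_union.mp hp with h | h
    · exact (hS p (Finset.mem_sdiff.mp h).1).1
    · exact (hU p h).1
  have hdisj₁ : ∀ p ∈ SI, p ∉ X₁ := by
    intro p hp hmem
    rcases Finset.mem_union.mp hmem with h | h
    · exact (Finset.mem_sdiff.mp h).2 hp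
    · exact hStN p (hSIS hp) (hU p h).2
  have hXU₁ : tN.primeFactors ⊆ X₁ := Finset.subset_union_right
  obtain ⟨x₁, y₁, hnorm₁, happrox₁, hint₁, hqr₁⟩ :=
    stage a₁ ha₁ tN ht1 SI X₁ hSIh hX₁p hdisj₁ hXU₁ E ζS hζS
  set R₁ : Finset ℕ := ((x₁.den * y₁.den).primeFactors.erase 2).filter
    (fun q => ¬ I ≤ Ideal.span {(q : ↥Zhalf)}) with hR₁def
  have hdens₁ : x₁.den * y₁.den ≠ 0 := Nat.mul_ne_zero x₁.den_nz y₁.den_nz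
  have hR₁mem : ∀ q ∈ R₁, q.Prime ∧ q ≠ 2 ∧ (q ∣ x₁.den ∨ q ∣ y₁.den) ∧
      ¬ I ≤ Ideal.span {(q : ↥Zhalf)} := by
    intro q hq
    obtain ⟨hq1, hq2⟩ := Finset.mem_filter.mp hq
    obtain ⟨hq3, hq4⟩ := Finset.mem_erase.mp hq1
    obtain ⟨hq5, hq6, -⟩ := Nat.mem_primeFactors.mp hq4
    exact ⟨hq5, hq3, (Nat.Prime.dvd_mul hq5).mp hq6, hq2⟩
  have hR₁mem' : ∀ q : ℕ, q.Prime → q ≠ 2 → (q ∣ x₁.den ∨ q ∣ y₁.den) →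
      ¬ I ≤ Ideal.span {(q : ↥Zhalf)} → q ∈ R₁ := by
    intro q h1 h2 h3 h4
    refine Finset.mem_filter.mpr ⟨Finset.mem_erase.mpr ⟨h2,
      Nat.mem_primeFactors.mpr ⟨h1, ?_, hdens₁⟩⟩, h4⟩
    rcases h3 with h | h
    · exact h.mul_right _
    · exact h.mul_left _
  have hR₁SI : ∀ q ∈ R₁, q ∉ SI := by
    intro q hq hqSI
    exact (hR₁mem q hq).2.2.2 (Finset.mem_filter.mp hqSI).2
  -- stage 2
  set X₂ : Finset ℕ := X₁ ∪ R₁ with hX₂def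
  have hX₂p : ∀ p ∈ X₂, p.Prime := by
    intro p hp
    rcases Finset.mem_union.mp hp with h | h
    · exact hX₁p p h
    · exact (hR₁mem p h).1
  have hdisj₂ : ∀ p ∈ SI, p ∉ X₂ := by
    intro p hp hmem
    rcases Finset.mem_union.mp hmem with h | h
    · exact hdisj₁ p hp h
    · exact hR₁SI p h hp
  have hXU₂ : tN.primeFactors ⊆ X₂ := hXU₁.trans Finset.subset_union_left
  obtain ⟨x₂, y₂, hnorm₂, happrox₂, hint₂, hqr₂⟩ :=
    stage a₂ ha₂ tN ht1 SI X₂ hSIh hX₂p hdisj₂ hXU₂ E ζS hζS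
  set R₂ : Finset ℕ := ((x₂.den * y₂.den).primeFactors.erase 2).filter
    (fun q => ¬ I ≤ Ideal.span {(q : ↥Zhalf)}) with hR₂def
  have hdens₂ : x₂.den * y₂.den ≠ 0 := Nat.mul_ne_zero x₂.den_nz y₂.den_nz
  have hR₂mem : ∀ q ∈ R₂, q.Prime ∧ q ≠ 2 ∧ (q ∣ x₂.den ∨ q ∣ y₂.den) ∧
      ¬ I ≤ Ideal.span {(q : ↥Zhalf)} := by
    intro q hq
    obtain ⟨hq1, hq2⟩ := Finset.mem_filter.mp hq
    obtain ⟨hq3, hq4⟩ := Finset.mem_erase.mp hq1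
    obtain ⟨hq5, hq6, -⟩ := Nat.mem_primeFactors.mp hq4
    exact ⟨hq5, hq3, (Nat.Prime.dvd_mul hq5).mp hq6, hq2⟩
  have hR₂SI : ∀ q ∈ R₂, q ∉ SI := by
    intro q hq hqSI
    exact (hR₂mem q hq).2.2.2 (Finset.mem_filter.mp hqSI).2
  -- square roots at R primes
  have hζRex : ∀ (p : ℕ) (hp : p.Prime), ∃ z : @PadicInt p ⟨hp⟩,
      (p ∈ R₁ ∨ p ∈ R₂) →
      (letI : Fact p.Prime := ⟨hp⟩
       (z : ℚ_[p]) ^ 2 = -((tN : ℕ) : ℚ_[p])) := by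
    intro p hp
    by_cases hpR : p ∈ R₁ ∨ p ∈ R₂
    · haveI : Fact p.Prime := ⟨hp⟩
      have hqd : p ≠ 2 ∧ (∃ u : ℤ, (p : ℤ) ∣ u ^ 2 + tN ∧ ¬ (p : ℤ) ∣ u) := by
        rcases hpR with h | h
        · obtain ⟨h1, h2, h3, -⟩ := hR₁mem p h
          exact ⟨h2, (hqr₁ p h1 h3 (hR₁SI p h)).2⟩
        · obtain ⟨h1, h2, h3, -⟩ := hR₂mem p h
          exact ⟨h2, (hqr₂ p h1 h3 (hR₂SI p h)).2⟩
      obtain ⟨hp2, u, hu1, hu2⟩ := hqd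
      obtain ⟨z, hz⟩ := exists_padic_sqrt (p := p) hp2 (tN : ℤ) u hu1 hu2
      refine ⟨z, fun _ => ?_⟩
      rw [hz]
      push_cast
      ring
    · exact ⟨0, fun h => absurd h hpR⟩
  choose ζR hζR using hζRex
  set ζfin : ∀ (p : ℕ) (hp : p.Prime), @PadicInt p ⟨hp⟩ :=
    fun p hp => if p ∈ SI then ζS p hp else ζR p hp with hζfin
  -- the element t of Zhalf
  have htQ : (((tN : ℕ) : ↥Zhalf) : ℚ) = ((tN : ℕ) : ℚ) := by
    norm_cast
  refine ⟨(tN : ↥Zhalf), x₁, y₁, x₂, y₂, R₁, R₂, ζfin, ?_, ?_, ?_, ?_, ?_, ?_, ?_, ?_, ?_⟩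
  · rw [htQ]
    exact_mod_cast Nat.pos_of_ne_zero htN0
  · rw [htQ]; exact hnorm₁
  · rw [htQ]; exact hnorm₂
  · exact fun p hp => ⟨(hR₁mem p hp).1, (hR₁mem p hp).2.1⟩
  · exact fun p hp => ⟨(hR₂mem p hp).1, (hR₂mem p hp).2.1⟩
  · -- square root property
    intro p hp hp2 hcase
    haveI : Fact p.Prime := ⟨hp⟩
    have hcast : -((((tN : ℕ) : ↥Zhalf) : ℚ) : ℚ_[p]) = -((tN : ℕ) : ℚ_[p]) := by
      rw [htQ]; push_cast; ring
    rw [hcast]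
    by_cases hpSI : p ∈ SI
    · simp only [hζfin, if_pos hpSI]
      exact hζS p hp hpSI
    · have hpR : p ∈ R₁ ∨ p ∈ R₂ := by
        rcases hcase with h | h | h
        · exact absurd (Finset.mem_filter.mpr ⟨hmemS p hp hp2 h, h⟩) hpSI
        · exact Or.inl h
        · exact Or.inr h
      simp only [hζfin, if_neg hpSI]
      exact hζR p hp hpR
  · -- clause (1)
    intro p hp hp2 hle e hlee
    haveI : Fact p.Prime := ⟨hp⟩
    have hpSI : p ∈ SI := Finset.mem_filter.mpr ⟨hmemS p hp hp2 hle, hle⟩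
    have hdvdm : p ^ e ∣ m := hkey p hp hp2 e hlee
    have heE : e ≤ E p := by
      rw [hEdef]
      exact (Nat.Prime.pow_dvd_iff_le_factorization hp hm0).mp hdvdm
    have hmono : (p : ℝ) ^ (-(E p : ℤ)) ≤ (p : ℝ) ^ (-(e : ℤ)) := by
      apply zpow_le_zpow_right₀ (by exact_mod_cast hp.one_lt.le)
      omega
    have hζeq : ζfin p hp = ζS p hp := by simp only [hζfin, if_pos hpSI]
    rw [hζeq]
    exact ⟨le_trans (happrox₁ p hp hpSI) hmono, le_trans (happrox₂ p hp hpSI) hmono⟩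
  · -- clause (2)
    intro p hp hp2
    have hval : ¬ p ∣ tN → ¬ 0 < padicValRat p ((((tN : ℕ) : ↥Zhalf) : ℚ)) := by
      intro hnd
      rw [htQ, padicValRat.of_nat, padicValNat.eq_zero_of_not_dvd hnd]
      norm_num
    refine ⟨?_, ?_, ?_, ?_, ?_, ?_⟩
    · intro hle hR
      exact (hR₁mem p hR).2.2.2 hle
    · intro hle hR
      exact (hR₂mem p hR).2.2.2 hle
    · intro hle
      exact hval (hStN p (hmemS p hp hp2 hle))
    · intro hR₁p hR₂p
      have h1 := hR₁mem p hR₁p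
      have hpX₂ : p ∈ X₂ := Finset.mem_union_right _ hR₁p
      have h2 := hint₂ p hpX₂
      rcases (hR₂mem p hR₂p).2.2.1 with h | h
      · exact h2.1 h
      · exact h2.2 h
    · intro hR
      have h1 := hR₁mem p hR
      exact hval (hqr₁ p h1.1 h1.2.2.1 (hR₁SI p hR)).1
    · intro hR
      have h1 := hR₂mem p hR
      exact hval (hqr₂ p h1.1 h1.2.2.1 (hR₂SI p hR)).1
  · -- clause (3)
    intro L _ _ _ ρ hρ _ q hq hq2 𝔮 hq𝔮
    have htden : ¬ q ∣ ((((tN : ℕ) : ↥Zhalf) : ℚ)).den := by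
      rw [htQ, Rat.den_natCast]
      exact fun h => hq.ne_one (Nat.dvd_one.mp h)
    constructor
    · intro hle hR
      have hx : ¬ q ∣ x₁.den := fun h => hR (hR₁mem' q hq hq2 (Or.inl h) hle)
      have hy : ¬ q ∣ y₁.den := fun h => hR (hR₁mem' q hq hq2 (Or.inr h) hle)
      exact val_z_one L 𝔮 q hq hq𝔮 x₁ y₁ _ hx hy htden ρ hρ (htQ ▸ hnorm₁)
    · intro hle hR
      have hR₂mem' : ∀ h3 : (q ∣ x₂.den ∨ q ∣ y₂.den), q ∈ R₂ := by
        intro h3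
        refine Finset.mem_filter.mpr ⟨Finset.mem_erase.mpr ⟨hq2,
          Nat.mem_primeFactors.mpr ⟨hq, ?_, hdens₂⟩⟩, hle⟩
        rcases h3 with h | h
        · exact h.mul_right _
        · exact h.mul_left _
      have hx : ¬ q ∣ x₂.den := fun h => hR (hR₂mem' (Or.inl h))
      have hy : ¬ q ∣ y₂.den := fun h => hR (hR₂mem' (Or.inr h))
      exact val_z_one L 𝔮 q hq hq𝔮 x₂ y₂ _ hx hy htden ρ hρ (htQ ▸ hnorm₂)
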